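/- The complex (𝔄_*, δ) decomposes as a direct sum of chain complexes indexed by pairs (i, L), where i ≥ 0 and L ranges over finite collections of i-element subsets of ℤ_{>0} with empty total intersection, each summand being isomorphic to the augmented chain complex of the infinite simplex; consequently the homology of (𝔄_*, δ) is identically zero. -/

import Mathlib

/-- The (1-based) rank of `a` in the increasingly ordered finite set `T`. -/
def rankIn (T : Finset ℕ) (a : ℕ) : ℕ := (T.filter (· ≤ a)).card

/-- `L` is a valid "hat part": a collection of `i`-element subsets of `ℤ_{>0}` with
empty total intersection. -/
def ValidL (i : ℕ) (L : Finset (Finset ℕ)) : Prop :=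
  (∀ s ∈ L, s.card = i) ∧ (∀ n : ℕ, ∃ s ∈ L, n ∉ s)

/-- Generators of 𝔄_*: pairs `(∩Λ, Λ̂)` with `∩Λ` disjoint from `⋃Λ̂` and `Λ̂` valid. -/
def GenP : Type :=
  {p : Finset ℕ × Finset (Finset ℕ) // Disjoint p.1 (p.2.sup id) ∧ ∃ i, ValidL i p.2}

/-- 𝔄_* as a ℚ-vector space. -/
abbrev 𝔄 : Type := GenP →₀ ℚ

/-- The chain complex `C_*(Δ₊)` of the infinite simplex, as a ℚ-vector space. -/
abbrev C : Type := (Finset ℕ) →₀ ℚ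

/-- The differential δ, acting on the `∩Λ` coordinate as the augmented simplicial
boundary. -/
noncomputable def deltaA : 𝔄 →ₗ[ℚ] 𝔄 :=
  Finsupp.lift 𝔄 ℚ GenP fun p =>
    ∑ a ∈ p.1.1,
      ((-1 : ℚ) ^ rankIn p.1.1 a) •
        Finsupp.single
          ⟨(p.1.1.erase a, p.1.2),
            Finset.disjoint_of_subset_left (Finset.erase_subset _ _) p.2.1, p.2.2⟩ 1

/-- The index set of the direct sum: pairs `(i, L)` with `L` a finite collection of
`i`-element subsets of `ℤ_{>0}` with empty total intersection. -/
def J : Type := {q : ℕ × Finset (Finset ℕ) // ValidL q.1 q.2}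

/-- The augmented simplicial boundary of `Δ₊`. -/
noncomputable def bdry : C →ₗ[ℚ] C :=
  Finsupp.lift C ℚ (Finset ℕ) fun I =>
    ∑ i ∈ I, ((-1 : ℚ) ^ rankIn I i) • Finsupp.single (I.erase i) 1

/-- The componentwise differential on the direct sum `⨁_{(i,L)} C_*(Δ₊)`. -/
noncomputable def D : DirectSum J (fun _ => C) →ₗ[ℚ] DirectSum J (fun _ => C) :=
  DFinsupp.mapRange.linearMap fun _ => bdry

open Finset
open Finset

instance : DecidableEq J := inferInstanceAs (DecidableEq {q : ℕ × Finset (Finset ℕ) // ValidL q.1 q.2})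

def prL (L : Finset (Finset ℕ)) : ℕ → Prop := fun n => n ∉ L.sup id

instance (L : Finset (Finset ℕ)) : DecidablePred (prL L) := fun n =>
  inferInstanceAs (Decidable (n ∉ L.sup id))

lemma prL_infinite (L : Finset (Finset ℕ)) : (setOf (prL L)).Infinite := by
  have h : setOf (prL L) = ((L.sup id : Finset ℕ) : Set ℕ)ᶜ := by ext n; show prL L n ↔ n ∈ ((L.sup id : Finset ℕ) : Set ℕ)ᶜ; simp [prL]
  rw [h]; exact (L.sup id).finite_toSet.infinite_compl

noncomputable def nthL (L : Finset (Finset ℕ)) : ℕ → ℕ := Nat.nth (prL L)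
noncomputable def cntL (L : Finset (Finset ℕ)) : ℕ → ℕ := Nat.count (prL L)

lemma nthL_strictMono (L : Finset (Finset ℕ)) : StrictMono (nthL L) :=
  Nat.nth_strictMono (prL_infinite L)

lemma nthL_not_mem (L : Finset (Finset ℕ)) (n : ℕ) : nthL L n ∉ L.sup id :=
  Nat.nth_mem_of_infinite (prL_infinite L) n

lemma cnt_nthL (L : Finset (Finset ℕ)) (n : ℕ) : cntL L (nthL L n) = n :=
  Nat.count_nth fun hf => absurd hf (prL_infinite L)

lemma nthL_cnt {L : Finset (Finset ℕ)} {a : ℕ} (ha : a ∉ L.sup id) :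
    nthL L (cntL L a) = a :=
  Nat.nth_count ha

lemma ValidL.unique {i i' : ℕ} {L : Finset (Finset ℕ)} (h : ValidL i L) (h' : ValidL i' L) :
    i = i' := by
  obtain ⟨s, hs, -⟩ := h.2 0
  rw [← h.1 s hs, h'.1 s hs]

lemma rankIn_image {f : ℕ → ℕ} (hf : StrictMono f) (S : Finset ℕ) (a : ℕ) :
    rankIn (S.image f) (f a) = rankIn S a := by
  unfold rankIn
  rw [← Finset.card_image_of_injective (S.filter (· ≤ a)) hf.injective]
  congr 1
  ext b
  simp only [Finset.mem_filter, Finset.mem_image]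
  constructor
  · rintro ⟨⟨x, hx, rfl⟩, h⟩
    exact ⟨x, ⟨hx, hf.le_iff_le.mp h⟩, rfl⟩
  · rintro ⟨x, ⟨hx, hxa⟩, rfl⟩
    exact ⟨⟨x, hx, rfl⟩, hf.le_iff_le.mpr hxa⟩

noncomputable def genEquiv : GenP ≃ Σ _ : J, Finset ℕ where
  toFun p := ⟨⟨(p.2.2.choose, p.1.2), p.2.2.choose_spec⟩, p.1.1.image (cntL p.1.2)⟩
  invFun x := ⟨(x.2.image (nthL x.1.1.2), x.1.1.2), by
      refine ⟨Finset.disjoint_left.mpr ?_, ⟨x.1.1.1, x.1.2⟩⟩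
      rintro a ha
      obtain ⟨n, -, rfl⟩ := Finset.mem_image.mp ha
      exact nthL_not_mem _ _⟩
  left_inv p := by
    apply Subtype.ext
    apply Prod.ext
    · show (p.1.1.image (cntL p.1.2)).image (nthL p.1.2) = p.1.1
      rw [Finset.image_image]
      ext b
      simp only [Finset.mem_image, Function.comp_apply]
      constructor
      · rintro ⟨x, hx, rfl⟩
        rw [nthL_cnt (Finset.disjoint_left.mp p.2.1 hx)]; exact hx
      · intro hb
        exact ⟨b, hb, nthL_cnt (Finset.disjoint_left.mp p.2.1 hb)⟩
    · rfl
  right_inv x := by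
    obtain ⟨⟨⟨i, L⟩, hv⟩, T⟩ := x
    have h2 : (T.image (nthL L)).image (cntL L) = T := by
      rw [Finset.image_image]
      have : (cntL L ∘ nthL L) = id := funext (cnt_nthL L)
      rw [this, Finset.image_id]
    dsimp only
    refine Sigma.ext ?_ (heq_of_eq h2)
    have h1 : ∀ (h : ∃ k, ValidL k L), h.choose = i := fun h =>
      ValidL.unique h.choose_spec hv
    exact Subtype.ext (Prod.ext (h1 _) rfl)

open Finset

noncomputable def φA : 𝔄 ≃ₗ[ℚ] DirectSum J (fun _ => C) :=
  (Finsupp.domLCongr genEquiv : 𝔄 ≃ₗ[ℚ] _).trans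
    (sigmaFinsuppLequivDFinsupp ℚ)

lemma phi_single (p : GenP) :
    φA (Finsupp.single p (1:ℚ)) =
      DFinsupp.single (genEquiv p).1 (Finsupp.single (genEquiv p).2 (1:ℚ)) := by
  show (sigmaFinsuppLequivDFinsupp ℚ) ((Finsupp.domLCongr genEquiv) (Finsupp.single p (1:ℚ))) = _
  rw [Finsupp.domLCongr_single]
  show sigmaFinsuppEquivDFinsupp (Finsupp.single (genEquiv p) (1:ℚ)) = _
  rw [sigmaFinsuppEquivDFinsupp_single]


lemma image_nth_cnt (L : Finset (Finset ℕ)) (T : Finset ℕ) :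
    (T.image (nthL L)).image (cntL L) = T := by
  rw [Finset.image_image]
  have h : (cntL L ∘ nthL L) = id := funext (cnt_nthL L)
  rw [h, Finset.image_id]

lemma image_cnt_nth {L : Finset (Finset ℕ)} {S : Finset ℕ} (hd : Disjoint S (L.sup id)) :
    (S.image (cntL L)).image (nthL L) = S := by
  rw [Finset.image_image]
  ext b
  simp only [Finset.mem_image, Function.comp_apply]
  constructor
  · rintro ⟨x, hx, rfl⟩
    rw [nthL_cnt (Finset.disjoint_left.mp hd hx)]; exact hx
  · intro hb
    exact ⟨b, hb, nthL_cnt (Finset.disjoint_left.mp hd hb)⟩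

lemma deltaA_single (p : GenP) :
    deltaA (Finsupp.single p 1) =
      ∑ a ∈ p.1.1, ((-1 : ℚ) ^ rankIn p.1.1 a) •
        Finsupp.single
          (⟨(p.1.1.erase a, p.1.2),
            Finset.disjoint_of_subset_left (Finset.erase_subset _ _) p.2.1, p.2.2⟩ : GenP) 1 := by
  simp only [deltaA, Finsupp.lift_apply]
  rw [Finsupp.sum_single_index (by simp), one_smul]
  rfl

lemma bdry_single (T : Finset ℕ) :
    bdry (Finsupp.single T 1) =
      ∑ i ∈ T, ((-1 : ℚ) ^ rankIn T i) • Finsupp.single (T.erase i) 1 := by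
  simp only [bdry, Finsupp.lift_apply]
  rw [Finsupp.sum_single_index (by simp), one_smul]

lemma main_sum (L : Finset (Finset ℕ)) (T : Finset ℕ) (jj : J) :
    ∑ a ∈ T.image (nthL L), ((-1:ℚ) ^ rankIn (T.image (nthL L)) a) •
        DFinsupp.single (β := fun _ : J => C) jj
          (Finsupp.single (((T.image (nthL L)).erase a).image (cntL L)) (1:ℚ))
      = ∑ i ∈ T, ((-1:ℚ) ^ rankIn T i) •
        DFinsupp.single (β := fun _ : J => C) jj (Finsupp.single (T.erase i) (1:ℚ)) := by
  rw [Finset.sum_image (fun x _ y _ h => (nthL_strictMono L).injective h)]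
  refine Finset.sum_congr rfl fun i _ => ?_
  rw [rankIn_image (nthL_strictMono L), ← Finset.image_erase (nthL_strictMono L).injective,
    image_nth_cnt]

noncomputable def lsing (jj : J) : C →ₗ[ℚ] DirectSum J (fun _ => C) :=
  DFinsupp.lsingle (R := ℚ) (M := fun _ : J => C) jj

lemma lsing_apply (jj : J) (v : C) :
    lsing jj v = DFinsupp.single (β := fun _ : J => C) jj v := rfl

lemma D_apply (x : DirectSum J (fun _ => C)) (j : J) : D x j = bdry (x j) := rfl

lemma D_single (jj : J) (v : C) :
    D (DFinsupp.single (β := fun _ : J => C) jj v) =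
      DFinsupp.single (β := fun _ : J => C) jj (bdry v) := by
  refine DFunLike.ext _ _ fun j => ?_
  rw [D_apply]
  by_cases h : j = jj
  · subst h
    rw [DFinsupp.single_eq_same, DFinsupp.single_eq_same]
  · rw [DFinsupp.single_eq_of_ne h, DFinsupp.single_eq_of_ne h, map_zero]

lemma comm_single (p : GenP) :
    φA (deltaA (Finsupp.single p 1)) = D (φA (Finsupp.single p 1)) := by
  rw [deltaA_single]
  erw [map_sum]
  rw [phi_single, D_single, bdry_single, ← lsing_apply, map_sum]
  obtain ⟨⟨S, L⟩, hd, hex⟩ := p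
  have hfst : ∀ (q : GenP) (h : q.1.2 = L),
      (genEquiv q).1 = (genEquiv ⟨(S, L), hd, hex⟩).1 := by
    rintro ⟨⟨S', L'⟩, hd', hex'⟩ h
    dsimp only at h
    subst h
    rfl
  set jj := (genEquiv ⟨(S, L), hd, hex⟩).1 with hjj
  set T := S.image (cntL L) with hT
  have hS' : S = T.image (nthL L) := (image_cnt_nth hd).symm
  calc
    ∑ a ∈ S, φA (((-1:ℚ) ^ rankIn S a) •
        Finsupp.single
          (⟨(S.erase a, L),
            Finset.disjoint_of_subset_left (Finset.erase_subset _ _) hd, hex⟩ : GenP) 1)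
      = ∑ a ∈ S, ((-1:ℚ) ^ rankIn S a) •
        DFinsupp.single (β := fun _ : J => C) jj
          (Finsupp.single ((S.erase a).image (cntL L)) (1:ℚ)) := by
        refine Finset.sum_congr rfl fun a _ => ?_
        erw [map_smul, phi_single, hfst _ rfl]
        rfl
    _ = ∑ i ∈ T, ((-1:ℚ) ^ rankIn T i) •
        DFinsupp.single (β := fun _ : J => C) jj
          (Finsupp.single (T.erase i) (1:ℚ)) := by
        rw [hS']
        exact main_sum L T _
    _ = ∑ i ∈ T, lsing jj
          (((-1:ℚ) ^ rankIn T i) • Finsupp.single (T.erase i) (1:ℚ)) := by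
        refine Finset.sum_congr rfl fun i _ => ?_
        rw [map_smul, lsing_apply]

lemma comm_all : (φA.toLinearMap ∘ₗ deltaA) = (D ∘ₗ φA.toLinearMap) := by
  refine Finsupp.lhom_ext fun p b => ?_
  have hb : (Finsupp.single p b : 𝔄) = b • Finsupp.single p 1 := by
    rw [Finsupp.smul_single, smul_eq_mul, mul_one]
  simp only [LinearMap.comp_apply, hb, map_smul, LinearEquiv.coe_coe]
  rw [comm_single]

lemma comm_x (x : 𝔄) : φA (deltaA x) = D (φA x) := LinearMap.congr_fun comm_all x

noncomputable def hC : C →ₗ[ℚ] C :=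
  Finsupp.lift C ℚ (Finset ℕ) fun I =>
    if 0 ∈ I then 0 else -Finsupp.single (insert 0 I) 1

lemma hC_single (I : Finset ℕ) :
    hC (Finsupp.single I 1) = if 0 ∈ I then 0 else -Finsupp.single (insert 0 I) 1 := by
  simp only [hC, Finsupp.lift_apply]
  rw [Finsupp.sum_single_index (by simp), one_smul]

lemma rankIn_zero {I : Finset ℕ} (h0 : 0 ∈ I) : rankIn I 0 = 1 := by
  unfold rankIn
  have h : I.filter (· ≤ 0) = {0} := by
    ext b
    simp only [Finset.mem_filter, Finset.mem_singleton, Nat.le_zero]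
    exact ⟨fun h => h.2, fun h => ⟨h ▸ h0, h⟩⟩
  rw [h, Finset.card_singleton]

lemma rankIn_insert_zero_of_mem {I : Finset ℕ} (h0 : 0 ∉ I) {a : ℕ} (ha : a ∈ I) :
    rankIn (insert 0 I) a = rankIn I a + 1 := by
  unfold rankIn
  have h : (insert 0 I).filter (· ≤ a) = insert 0 (I.filter (· ≤ a)) := by
    rw [Finset.filter_insert, if_pos (Nat.zero_le a)]
  rw [h, Finset.card_insert_of_notMem (fun hc => h0 (Finset.mem_of_mem_filter _ hc))]

lemma homotopy_single (I : Finset ℕ) :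
    bdry (hC (Finsupp.single I 1)) + hC (bdry (Finsupp.single I 1)) = Finsupp.single I 1 := by
  by_cases h0 : 0 ∈ I
  · rw [hC_single, if_pos h0, map_zero, zero_add, bdry_single, map_sum]
    rw [Finset.sum_eq_single_of_mem 0 h0 (fun a _ hne => by
      rw [map_smul, hC_single,
        if_pos (Finset.mem_erase.mpr ⟨Ne.symm hne, h0⟩), smul_zero])]
    rw [map_smul, hC_single, if_neg (Finset.notMem_erase 0 I), rankIn_zero h0,
      Finset.insert_erase h0]
    simp
  · rw [bdry_single, map_sum, hC_single, if_neg h0, map_neg, bdry_single,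
      Finset.sum_insert h0, rankIn_zero (Finset.mem_insert_self 0 I), Finset.erase_insert h0]
    have h1 : ∀ a ∈ I,
        ((-1:ℚ) ^ rankIn (insert 0 I) a) • Finsupp.single ((insert 0 I).erase a) (1:ℚ)
        = -(((-1:ℚ) ^ rankIn I a) • Finsupp.single (insert 0 (I.erase a)) (1:ℚ)) := by
      intro a ha
      have hane : a ≠ 0 := fun h => h0 (h ▸ ha)
      rw [rankIn_insert_zero_of_mem h0 ha, Finset.erase_insert_of_ne (Ne.symm hane),
        pow_succ, mul_comm, neg_one_mul, neg_smul]
    have h2 : ∀ a ∈ I, hC (((-1:ℚ) ^ rankIn I a) • Finsupp.single (I.erase a) (1:ℚ))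
        = -(((-1:ℚ) ^ rankIn I a) • Finsupp.single (insert 0 (I.erase a)) (1:ℚ)) := by
      intro a ha
      rw [map_smul, hC_single,
        if_neg (fun hmem => h0 (Finset.mem_of_mem_erase hmem)), smul_neg]
    rw [Finset.sum_congr rfl h1, Finset.sum_congr rfl h2]
    simp only [pow_one, neg_smul, one_smul, Finset.sum_neg_distrib]
    abel

lemma homotopyC (c : C) : bdry (hC c) + hC (bdry c) = c := by
  have h : (bdry ∘ₗ hC + hC ∘ₗ bdry) = LinearMap.id := by
    refine Finsupp.lhom_ext fun I b => ?_
    have hb : (Finsupp.single I b : C) = b • Finsupp.single I 1 := by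
      rw [Finsupp.smul_single, smul_eq_mul, mul_one]
    simp only [hb, map_smul, LinearMap.add_apply, LinearMap.comp_apply, LinearMap.id_apply]
    rw [homotopy_single]
  have := LinearMap.congr_fun h c
  simpa using this

noncomputable def HD : DirectSum J (fun _ => C) →ₗ[ℚ] DirectSum J (fun _ => C) :=
  DFinsupp.mapRange.linearMap fun _ => hC

lemma HD_apply (x : DirectSum J (fun _ => C)) (j : J) : HD x j = hC (x j) := rfl


/-- `(𝔄_*, δ)` decomposes as a direct sum of copies of the (acyclic) augmented chain
complex of the infinite simplex, indexed by the pairs `(i, L)`; consequently its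
homology is identically zero. -/
theorem stmt18 :
    (∃ φ : 𝔄 ≃ₗ[ℚ] DirectSum J (fun _ => C), ∀ x : 𝔄, φ (deltaA x) = D (φ x)) ∧
    (∀ x : 𝔄, deltaA x = 0 → ∃ y : 𝔄, deltaA y = x) := by
  constructor
  · exact ⟨φA, comm_x⟩
  · intro x hx
    refine ⟨φA.symm (HD (φA x)), ?_⟩
    apply φA.injective
    rw [comm_x, LinearEquiv.apply_symm_apply]
    have hD0 : D (φA x) = 0 := by rw [← comm_x, hx, map_zero]
    refine DFunLike.ext _ _ fun j => ?_
    rw [D_apply, HD_apply]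
    have hb0 : bdry ((φA x) j) = 0 := by
      have h2 : (D (φA x)) j = (0 : DirectSum J (fun _ => C)) j := by rw [hD0]
      rw [D_apply] at h2
      simpa using h2
    have h3 := homotopyC ((φA x) j)
    rw [hb0, map_zero, add_zero] at h3
    exact h3
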